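/- Given an input–output table {(σ_1, v_1), ..., (σ_n, v_n)} of evaluation contexts and untagged values, the set ℓ(w(σ_1,v_1) * ⋯ * w(σ_n,v_n)) equals exactly the set of linear expressions that evaluate to v_i in context σ_i for every i = 1, ..., n; in particular, this set is finite and computable. -/

import Mathlib

/-- Linear expressions over `n` variables: trees built from variables `x i` and
constructor applications `c(e₁,...,e_k)` (constructors named by naturals). -/
inductive LinExpr (n : ℕ) : Type
  | var : Fin n → LinExpr n
  | cons : ℕ → List (LinExpr n) → LinExpr n

/-- Tagged trees (ℓ-values): each node carries a constructor symbol and a tag,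
a finite subset of `{∘, 1, ..., n}` modelled as `Finset (Option (Fin n))`
(`none` playing the role of `∘`). -/
inductive TaggedTree (n : ℕ) : Type
  | node : ℕ → Finset (Option (Fin n)) → List (TaggedTree n) → TaggedTree n

/-- Membership in the set `ℓ(w)` of linear expressions extracted from a tagged tree:
`ℓ(c^A(w₁,...,w_k)) = {x i | i ∈ A} ∪ ({c(e₁,...,e_k) | e_i ∈ ℓ(w_i)} if ∘ ∈ A else ∅)`. -/
inductive EllMem {n : ℕ} : LinExpr n → TaggedTree n → Prop
  | var {i : Fin n} {c A ws} (hi : some i ∈ A) :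
      EllMem (.var i) (.node c A ws)
  | cons {c A ws es} (hc : none ∈ A) (hes : List.Forall₂ EllMem es ws) :
      EllMem (.cons c es) (.node c A ws)

/-- The set `ℓ(w)` of linear expressions extracted from a tagged tree `w`. -/
def ell {n : ℕ} (w : TaggedTree n) : Set (LinExpr n) := {e | EllMem e w}
/-- Untagged values: finite trees of constructor applications. -/
inductive UVal : Type
  | node : ℕ → List UVal → UVal

mutual
/-- Evaluation of a linear expression in a context `σ` assigning values to variables:
each variable `x i` is replaced by `σ i`. -/
def evalLin {n : ℕ} (σ : Fin n → UVal) : LinExpr n → UVal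
  | .var i => σ i
  | .cons c es => .node c (evalLinList σ es)

/-- Pointwise evaluation of a list of linear expressions (i.e. `List.map (evalLin σ)`). -/
def evalLinList {n : ℕ} (σ : Fin n → UVal) : List (LinExpr n) → List UVal
  | [] => []
  | e :: es => evalLin σ e :: evalLinList σ es
end

mutual
/-- The tagging function `w(σ, v)`: the node `c(v₁,...,v_k)` receives the tag
`{∘} ∪ {i | σ(x i) = c(v₁,...,v_k)}` and the children are tagged recursively. -/
noncomputable def wTag {n : ℕ} (σ : Fin n → UVal) : UVal → TaggedTree n
  | .node c vs =>
      .node c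
        (open scoped Classical in
          insert none ((Finset.univ.filter (fun i : Fin n => σ i = UVal.node c vs)).image some))
        (wTagList σ vs)

/-- Pointwise tagging of a list of values (i.e. `List.map (wTag σ)`). -/
noncomputable def wTagList {n : ℕ} (σ : Fin n → UVal) : List UVal → List (TaggedTree n)
  | [] => []
  | v :: vs => wTag σ v :: wTagList σ vs
end

mutual
/-- The intersection operation `w₁ * w₂` on tagged trees:
`c₁^A(w₁s) * c₂^B(w₂s)` is `c₁^{A∩B}(zipWith (*) w₁s w₂s)` when `c₁ = c₂`,
and `c₁^{(A∩B)\{∘}}(w₁s)` otherwise. -/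
def star {n : ℕ} : TaggedTree n → TaggedTree n → TaggedTree n
  | .node c₁ A ws₁, .node c₂ B ws₂ =>
      if c₁ = c₂ then .node c₁ (A ∩ B) (starList ws₁ ws₂)
      else .node c₁ ((A ∩ B).erase none) ws₁

/-- Pointwise `star` on lists (i.e. `List.zipWith star`). -/
def starList {n : ℕ} : List (TaggedTree n) → List (TaggedTree n) → List (TaggedTree n)
  | w₁ :: t₁, w₂ :: t₂ => star w₁ w₂ :: starList t₁ t₂
  | _, _ => []
end

/-- Well-formedness of a value with respect to an arity assignment `ar`: every node
labeled `c` has exactly `ar c` children. -/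
inductive UValWF (ar : ℕ → ℕ) : UVal → Prop
  | node {c vs} (hlen : vs.length = ar c) (hvs : ∀ v ∈ vs, UValWF ar v) :
      UValWF ar (.node c vs)

section Aux

variable {n : ℕ}

/-- Custom induction principle for `LinExpr`. -/
theorem LinExpr.induct {P : LinExpr n → Prop}
    (hv : ∀ i, P (.var i))
    (hc : ∀ c es, (∀ e ∈ es, P e) → P (.cons c es)) : ∀ e, P e := by
  have key : ∀ N, ∀ e : LinExpr n, sizeOf e < N → P e := by
    intro N
    induction N with
    | zero => intro e h; exact absurd h (Nat.not_lt_zero _)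
    | succ N ih =>
      intro e h
      cases e with
      | var i => exact hv i
      | cons c es =>
        refine hc c es fun e' he' => ih e' ?_
        have h1 := List.sizeOf_lt_of_mem he'
        have h2 : sizeOf (LinExpr.cons (n := n) c es) = 1 + sizeOf c + sizeOf es := by
          simp
        omega
  exact fun e => key (sizeOf e + 1) e (Nat.lt_succ_self _)

/-- Custom induction principle for `TaggedTree`. -/
theorem TaggedTree.induct {P : TaggedTree n → Prop}
    (hc : ∀ c A ws, (∀ w ∈ ws, P w) → P (.node c A ws)) : ∀ w, P w := by
  have key : ∀ N, ∀ w : TaggedTree n, sizeOf w < N → P w := by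
    intro N
    induction N with
    | zero => intro w h; exact absurd h (Nat.not_lt_zero _)
    | succ N ih =>
      intro w h
      cases w with
      | node c A ws =>
        refine hc c A ws fun w' hw' => ih w' ?_
        have h1 := List.sizeOf_lt_of_mem hw'
        have h2 : sizeOf (TaggedTree.node (n := n) c A ws)
            = 1 + sizeOf c + sizeOf A + sizeOf ws := by simp
        omega
  exact fun w => key (sizeOf w + 1) w (Nat.lt_succ_self _)

/-- Custom induction principle for `UVal`. -/
theorem UVal.induct {P : UVal → Prop}
    (hc : ∀ c vs, (∀ v ∈ vs, P v) → P (.node c vs)) : ∀ v, P v := by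
  have key : ∀ N, ∀ v : UVal, sizeOf v < N → P v := by
    intro N
    induction N with
    | zero => intro v h; exact absurd h (Nat.not_lt_zero _)
    | succ N ih =>
      intro v h
      cases v with
      | node c vs =>
        refine hc c vs fun v' hv' => ih v' ?_
        have h1 := List.sizeOf_lt_of_mem hv'
        have h2 : sizeOf (UVal.node c vs) = 1 + sizeOf c + sizeOf vs := by simp
        omega
  exact fun v => key (sizeOf v + 1) v (Nat.lt_succ_self _)

theorem evalLinList_eq_map (σ : Fin n → UVal) :
    ∀ es : List (LinExpr n), evalLinList σ es = es.map (evalLin σ)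
  | [] => rfl
  | e :: es => by rw [evalLinList, List.map_cons, evalLinList_eq_map]

theorem wTagList_eq_map (σ : Fin n → UVal) :
    ∀ vs : List UVal, wTagList (n := n) σ vs = vs.map (wTag σ)
  | [] => rfl
  | v :: vs => by rw [wTagList, List.map_cons, wTagList_eq_map]

theorem starList_eq_zipWith :
    ∀ ws₁ ws₂ : List (TaggedTree n), starList ws₁ ws₂ = List.zipWith star ws₁ ws₂
  | [], _ => by cases ‹List (TaggedTree n)› <;> rfl
  | _ :: _, [] => rfl
  | w₁ :: t₁, w₂ :: t₂ => by
      rw [starList, List.zipWith_cons_cons, starList_eq_zipWith]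

theorem star_node {n : ℕ} (c₁ : ℕ) (A : Finset (Option (Fin n))) (ws₁ : List (TaggedTree n))
    (c₂ : ℕ) (B : Finset (Option (Fin n))) (ws₂ : List (TaggedTree n)) :
    star (.node c₁ A ws₁) (.node c₂ B ws₂) =
      if c₁ = c₂ then .node c₁ (A ∩ B) (starList ws₁ ws₂)
      else .node c₁ ((A ∩ B).erase none) ws₁ := rfl

theorem ellmem_var_iff {i : Fin n} {c A ws} :
    EllMem (LinExpr.var i) (TaggedTree.node c A ws) ↔ some i ∈ A :=
  ⟨fun h => by cases h; assumption, EllMem.var⟩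

theorem ellmem_cons_iff {c : ℕ} {es : List (LinExpr n)} {c' A ws} :
    EllMem (LinExpr.cons c es) (TaggedTree.node c' A ws) ↔
      c = c' ∧ none ∈ A ∧ List.Forall₂ EllMem es ws := by
  constructor
  · intro h; cases h; exact ⟨rfl, ‹_›, ‹_›⟩
  · rintro ⟨rfl, h1, h2⟩; exact .cons h1 h2

theorem forall₂_congr_mem {α β : Type*} {R S : α → β → Prop} :
    ∀ {l₁ : List α} {l₂ : List β}, (∀ a ∈ l₁, ∀ b, R a b ↔ S a b) →
      (List.Forall₂ R l₁ l₂ ↔ List.Forall₂ S l₁ l₂)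
  | [], l₂, _ => by simp [List.forall₂_nil_left_iff]
  | a :: l₁, [], _ => by simp
  | a :: l₁, b :: l₂, h => by
      simp only [List.forall₂_cons]
      rw [h a (List.mem_cons_self) b,
        forall₂_congr_mem (fun a ha => h a (List.mem_cons_of_mem _ ha))]

theorem forall₂_eq_map {α β : Type*} {f : α → β} :
    ∀ {l₁ : List α} {l₂ : List β},
      List.Forall₂ (fun a b => f a = b) l₁ l₂ ↔ l₁.map f = l₂
  | [], l₂ => by simp [List.forall₂_nil_left_iff, eq_comm]
  | a :: l₁, [] => by simp
  | a :: l₁, b :: l₂ => by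
      simp only [List.forall₂_cons, List.map_cons, List.cons.injEq]
      rw [forall₂_eq_map]

/-- `ℓ(w(σ,v))` is exactly the set of expressions evaluating to `v`. -/
theorem ellmem_wTag (σ : Fin n → UVal) :
    ∀ e : LinExpr n, ∀ v : UVal, EllMem e (wTag σ v) ↔ evalLin σ e = v := by
  intro e
  induction e using LinExpr.induct with
  | hv i =>
    rintro ⟨c, vs⟩
    rw [wTag, ellmem_var_iff, evalLin]
    simp
  | hc c es ih =>
    rintro ⟨c', vs⟩
    rw [wTag, ellmem_cons_iff, evalLin]
    simp only [Finset.mem_insert, true_or, true_and, UVal.node.injEq]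
    constructor
    · rintro ⟨rfl, hf⟩
      refine ⟨rfl, ?_⟩
      rw [wTagList_eq_map, List.forall₂_map_right_iff,
        forall₂_congr_mem (fun e he v => ih e he v)] at hf
      rw [evalLinList_eq_map, forall₂_eq_map.mp hf]
    · rintro ⟨rfl, hf⟩
      refine ⟨rfl, ?_⟩
      rw [wTagList_eq_map, List.forall₂_map_right_iff,
        forall₂_congr_mem (fun e he v => ih e he v), forall₂_eq_map,
        ← evalLinList_eq_map]
      exact hf

/-- Well-formedness of tagged trees with respect to an arity assignment. -/
inductive TWF (ar : ℕ → ℕ) : TaggedTree n → Prop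
  | node {c A ws} (hlen : ws.length = ar c) (h : ∀ w ∈ ws, TWF ar w) :
      TWF ar (.node c A ws)

theorem wTag_wf {ar : ℕ → ℕ} (σ : Fin n → UVal) :
    ∀ v : UVal, UValWF ar v → TWF ar (wTag (n := n) σ v) := by
  intro v
  induction v using UVal.induct with
  | hc c vs ih =>
    rintro ⟨hlen, hvs⟩
    rw [wTag]
    refine TWF.node ?_ ?_
    · rw [wTagList_eq_map, List.length_map]; exact hlen
    · intro w hw
      rw [wTagList_eq_map, List.mem_map] at hw
      obtain ⟨v', hv', rfl⟩ := hw
      exact ih v' hv' (hvs v' hv')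

theorem mem_zipWith_star {w : TaggedTree n} :
    ∀ {ws₁ ws₂ : List (TaggedTree n)}, w ∈ List.zipWith star ws₁ ws₂ →
      ∃ a ∈ ws₁, ∃ b ∈ ws₂, w = star a b
  | [], _, h => by simp at h
  | _ :: _, [], h => by simp at h
  | a :: t₁, b :: t₂, h => by
      rcases List.mem_cons.mp h with h | h
      · exact ⟨a, List.mem_cons_self, b, List.mem_cons_self, h⟩
      · obtain ⟨a', ha', b', hb', rfl⟩ := mem_zipWith_star h
        exact ⟨a', List.mem_cons_of_mem _ ha', b', List.mem_cons_of_mem _ hb', rfl⟩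

theorem star_wf {ar : ℕ → ℕ} :
    ∀ w₁ w₂ : TaggedTree n, TWF ar w₁ → TWF ar w₂ → TWF ar (star w₁ w₂) := by
  intro w₁
  induction w₁ using TaggedTree.induct with
  | hc c₁ A ws₁ ih =>
    rintro ⟨c₂, B, ws₂⟩ ⟨hlen₁, h₁⟩ ⟨hlen₂, h₂⟩
    rw [star_node]
    split
    · next hc =>
      subst hc
      refine TWF.node ?_ ?_
      · rw [starList_eq_zipWith, List.length_zipWith, hlen₁, hlen₂, min_self]
      · intro w hw
        rw [starList_eq_zipWith] at hw
        obtain ⟨a, ha, b, hb, rfl⟩ := mem_zipWith_star hw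
        exact ih a ha b (h₁ a ha) (h₂ b hb)
    · exact TWF.node hlen₁ h₁

theorem forall₂_zipWith_star {es : List (LinExpr n)} :
    ∀ {ws₁ ws₂ : List (TaggedTree n)}, ws₁.length = ws₂.length →
      (∀ e ∈ es, ∀ w₁ ∈ ws₁, ∀ w₂ ∈ ws₂,
        (EllMem e (star w₁ w₂) ↔ EllMem e w₁ ∧ EllMem e w₂)) →
      (List.Forall₂ EllMem es (List.zipWith star ws₁ ws₂) ↔
        List.Forall₂ EllMem es ws₁ ∧ List.Forall₂ EllMem es ws₂) := by
  induction es with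
  | nil =>
    intro ws₁ ws₂ hlen _
    cases ws₁ with
    | nil => cases ws₂ with
      | nil => simp
      | cons _ _ => simp at hlen
    | cons a t₁ => cases ws₂ with
      | nil => simp at hlen
      | cons b t₂ => simp
  | cons e es ihes =>
    intro ws₁ ws₂ hlen h
    cases ws₁ with
    | nil => cases ws₂ with
      | nil => simp
      | cons _ _ => simp at hlen
    | cons a t₁ => cases ws₂ with
      | nil => simp at hlen
      | cons b t₂ =>
        simp only [List.zipWith_cons_cons, List.forall₂_cons]
        rw [h e (List.mem_cons_self) a (List.mem_cons_self) b
          (List.mem_cons_self),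
          ihes (by simpa using hlen)
            (fun e' he' w₁ hw₁ w₂ hw₂ => h e' (List.mem_cons_of_mem _ he')
              w₁ (List.mem_cons_of_mem _ hw₁) w₂ (List.mem_cons_of_mem _ hw₂))]
        tauto

/-- `ℓ(w₁ * w₂) = ℓ(w₁) ∩ ℓ(w₂)` for well-formed tagged trees. -/
theorem ellmem_star {ar : ℕ → ℕ} :
    ∀ e : LinExpr n, ∀ w₁ w₂ : TaggedTree n, TWF ar w₁ → TWF ar w₂ →
      (EllMem e (star w₁ w₂) ↔ EllMem e w₁ ∧ EllMem e w₂) := by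
  intro e
  induction e using LinExpr.induct with
  | hv i =>
    rintro ⟨c₁, A, ws₁⟩ ⟨c₂, B, ws₂⟩ _ _
    rw [star_node]
    split
    · next hc => subst hc; simp [ellmem_var_iff, Finset.mem_inter]
    · simp [ellmem_var_iff, Finset.mem_inter, Finset.mem_erase]
  | hc c es ih =>
    rintro ⟨c₁, A, ws₁⟩ ⟨c₂, B, ws₂⟩ hw₁ hw₂
    obtain ⟨hlen₁, h₁⟩ := hw₁
    obtain ⟨hlen₂, h₂⟩ := hw₂
    rw [star_node]
    split
    · next hceq =>
      subst hceq
      rw [ellmem_cons_iff, ellmem_cons_iff, ellmem_cons_iff, starList_eq_zipWith]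
      by_cases hcc : c = c₁
      · subst hcc
        simp only [true_and, Finset.mem_inter]
        rw [forall₂_zipWith_star (hlen₁.trans hlen₂.symm)
          (fun e' he' w₁ hw₁' w₂ hw₂' => ih e' he' w₁ w₂ (h₁ w₁ hw₁') (h₂ w₂ hw₂'))]
        tauto
      · simp [hcc]
    · next hcne =>
      rw [ellmem_cons_iff, ellmem_cons_iff, ellmem_cons_iff]
      constructor
      · rintro ⟨rfl, hmem, -⟩
        exact absurd (Finset.mem_erase.mp hmem).1 (by simp)
      · rintro ⟨⟨rfl, -, -⟩, ⟨rfl, -, -⟩⟩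
        exact absurd rfl hcne

theorem forall₂_set_finite :
    ∀ ws : List (TaggedTree n), (∀ w ∈ ws, (ell w).Finite) →
      {es : List (LinExpr n) | List.Forall₂ EllMem es ws}.Finite := by
  intro ws
  induction ws with
  | nil =>
    intro _
    have : {es : List (LinExpr n) | List.Forall₂ EllMem es ([] : List (TaggedTree n))}
        = {[]} := by
      ext es; simp [List.forall₂_nil_right_iff]
    rw [this]; exact Set.finite_singleton _
  | cons w ws ihl =>
    intro h
    have key : {es : List (LinExpr n) | List.Forall₂ EllMem es (w :: ws)}
        = Set.image2 List.cons (ell w) {es | List.Forall₂ EllMem es ws} := by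
      ext es
      cases es with
      | nil => simp
      | cons e es =>
        simp only [Set.mem_setOf_eq, List.forall₂_cons, Set.mem_image2]
        constructor
        · rintro ⟨h1, h2⟩; exact ⟨e, h1, es, h2, rfl⟩
        · rintro ⟨e', h1, es', h2, heq⟩
          obtain ⟨rfl, rfl⟩ := List.cons.injEq .. ▸ heq
          exact ⟨h1, h2⟩
    rw [key]
    exact Set.Finite.image2 _ (h w (List.mem_cons_self))
      (ihl fun w' hw' => h w' (List.mem_cons_of_mem _ hw'))

/-- `ℓ(w)` is always finite. -/
theorem ell_finite : ∀ w : TaggedTree n, (ell w).Finite := by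
  intro w
  induction w using TaggedTree.induct with
  | hc c A ws ih =>
    have hsub : ell (TaggedTree.node c A ws) ⊆
        Set.range (LinExpr.var (n := n)) ∪
          (fun es => LinExpr.cons c es) '' {es | List.Forall₂ EllMem es ws} := by
      intro e he
      cases he with
      | var hi => exact Or.inl ⟨_, rfl⟩
      | cons hc hes => exact Or.inr ⟨_, hes, rfl⟩
    exact Set.Finite.subset
      ((Set.finite_range _).union ((forall₂_set_finite ws ih).image _)) hsub

theorem ell_foldl {ar : ℕ → ℕ} :
    ∀ (T : List ((Fin n → UVal) × UVal)) (w : TaggedTree n), TWF ar w →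
      (∀ p ∈ T, UValWF ar p.2) →
      ell (T.foldl (fun w p => star w (wTag p.1 p.2)) w) =
        ell w ∩ {e | ∀ p ∈ T, evalLin p.1 e = p.2} := by
  intro T
  induction T with
  | nil => intro w _ _; simp
  | cons p T ih =>
    intro w hw hT
    rw [List.foldl_cons,
      ih _ (star_wf _ _ hw (wTag_wf p.1 p.2 (hT p (List.mem_cons_self))))
        (fun q hq => hT q (List.mem_cons_of_mem _ hq))]
    ext e
    simp only [Set.mem_inter_iff, Set.mem_setOf_eq, List.mem_cons]
    have h1 : e ∈ ell (star w (wTag p.1 p.2)) ↔ EllMem e w ∧ evalLin p.1 e = p.2 := by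
      rw [ell, Set.mem_setOf_eq,
        ellmem_star (ar := ar) e _ _ hw (wTag_wf p.1 p.2 (hT p (List.mem_cons_self))),
        ellmem_wTag]
    rw [h1]
    constructor
    · rintro ⟨⟨h2, h3⟩, h4⟩
      exact ⟨h2, fun q hq => by rcases hq with rfl | hq; exacts [h3, h4 q hq]⟩
    · rintro ⟨h2, h3⟩
      exact ⟨⟨h2, h3 p (Or.inl rfl)⟩, fun q hq => h3 q (Or.inr hq)⟩

end Aux

/-- Given a (nonempty) input–output table `(σ₁, v₁), ..., (σ_N, v_N)` of evaluation
contexts and well-formed untagged values, the set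
`ℓ(w(σ₁,v₁) * ⋯ * w(σ_N,v_N))` is exactly the set of linear expressions that evaluate
to `v_i` in context `σ_i` for every `i`; in particular, this set is finite. -/
theorem ell_star_fold_wTag {n : ℕ} (ar : ℕ → ℕ)
    (σ₁ : Fin n → UVal) (v₁ : UVal) (T : List ((Fin n → UVal) × UVal))
    (h₁ : UValWF ar v₁) (hT : ∀ p ∈ T, UValWF ar p.2) :
    ell (T.foldl (fun w p => star w (wTag p.1 p.2)) (wTag σ₁ v₁)) =
        {e : LinExpr n | evalLin σ₁ e = v₁ ∧ ∀ p ∈ T, evalLin p.1 e = p.2} ∧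
      (ell (T.foldl (fun w p => star w (wTag p.1 p.2)) (wTag σ₁ v₁))).Finite := by
  refine ⟨?_, ell_finite _⟩
  rw [ell_foldl (ar := ar) T _ (wTag_wf σ₁ v₁ h₁) hT]
  ext e
  simp only [Set.mem_inter_iff, Set.mem_setOf_eq, ell, ellmem_wTag]
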